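/- In the Euclidean bilevel setting with the Lipschitz-and-boundedness assumptions, define the approximate hypergradient map Ḡ(x,y) := ∇ₓ f(x,y) − ∇²_{xy} g(x,y)[(∇²_{yy} g(x,y))⁻¹ ∇_y f(x,y)]. Then for every x ∈ H₁ and all y₁, y₂ ∈ H₂, ‖Ḡ(x,y₁) − Ḡ(x,y₂)‖ ≤ (L + ρM/μ + L²/μ + LMρ/μ²)‖y₁ − y₂‖. Consequently, since ∇F(x) = Ḡ(x, y*(x)), the Hessian-inverse hypergradient estimate Ĝ_hinv F(x) := Ḡ(x, ŷ) satisfies ‖Ĝ_hinv F(x) − ∇F(x)‖ ≤ (L + κ_ρ M + κ_l L + κ_l κ_ρ M)‖ŷ − y*(x)‖ for every ŷ ∈ H₂, where κ_l := L/μ and κ_ρ := ρ/μ. -/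

import Mathlib

open scoped RealInnerProductSpace

variable {H₁ : Type*} [NormedAddCommGroup H₁] [InnerProductSpace ℝ H₁] [FiniteDimensional ℝ H₁]
variable {H₂ : Type*} [NormedAddCommGroup H₂] [InnerProductSpace ℝ H₂] [FiniteDimensional ℝ H₂]

/-- Partial gradient of a bifunction in the first variable: `∇ₓ f (x, y)`. -/
noncomputable def gradx (f : H₁ → H₂ → ℝ) (x : H₁) (y : H₂) : H₁ :=
  gradient (fun x' => f x' y) x

/-- Partial gradient of a bifunction in the second variable: `∇_y f (x, y)`. -/
noncomputable def grady (f : H₁ → H₂ → ℝ) (x : H₁) (y : H₂) : H₂ :=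
  gradient (fun y' => f x y') y

/-- Partial Hessian `∇²_{yy} g(x,y)`, a continuous linear operator on `H₂`. -/
noncomputable def hessyy (g : H₁ → H₂ → ℝ) (x : H₁) (y : H₂) : H₂ →L[ℝ] H₂ :=
  fderiv ℝ (fun y' => grady g x y') y

/-- Cross derivative `∇²_{yx} g(x,y) : H₁ → H₂`, the derivative in `x` of `∇_y g`. -/
noncomputable def hessyx (g : H₁ → H₂ → ℝ) (x : H₁) (y : H₂) : H₁ →L[ℝ] H₂ :=
  fderiv ℝ (fun x' => grady g x' y) x

/-- Cross derivative `∇²_{xy} g(x,y) : H₂ → H₁`, the adjoint of `∇²_{yx} g(x,y)`. -/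
noncomputable def hessxy (g : H₁ → H₂ → ℝ) (x : H₁) (y : H₂) : H₂ →L[ℝ] H₁ :=
  ContinuousLinearMap.adjoint (hessyx g x y)

/-- With `Ḡ(x,y) := ∇ₓ f(x,y) − ∇²_{xy} g(x,y)[(∇²_{yy} g(x,y))⁻¹ ∇_y f(x,y)]`,
for every `x` and all `y₁, y₂`: `‖Ḡ(x,y₁) − Ḡ(x,y₂)‖ ≤ (L + ρM/μ + L²/μ + LMρ/μ²)‖y₁ − y₂‖`.
Consequently, since `∇F(x) = Ḡ(x, y*(x))`, the Hessian-inverse hypergradient estimate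
`Ĝ_hinv F(x) := Ḡ(x, ŷ)` satisfies
`‖Ĝ_hinv F(x) − ∇F(x)‖ ≤ (L + κ_ρ M + κ_l L + κ_l κ_ρ M)‖ŷ − y*(x)‖`,
where `κ_l := L/μ` and `κ_ρ := ρ/μ`. -/
theorem statement5
    (f g : H₁ → H₂ → ℝ) (μ L ρ M : ℝ)
    (hμ : 0 < μ) (hL : 0 ≤ L) (hρ : 0 ≤ ρ) (hM : 0 ≤ M)
    (hf : ContDiff ℝ 2 fun p : H₁ × H₂ => f p.1 p.2)
    (hg : ContDiff ℝ 2 fun p : H₁ × H₂ => g p.1 p.2)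
    -- bounded gradients of `f`
    (hfxbd : ∀ (x : H₁) (y : H₂), ‖gradx f x y‖ ≤ M)
    (hfybd : ∀ (x : H₁) (y : H₂), ‖grady f x y‖ ≤ M)
    -- `∇ₓ f` and `∇_y f` are `L`-Lipschitz in each variable
    (hfxLx : ∀ (y : H₂) (x₁ x₂ : H₁), ‖gradx f x₁ y - gradx f x₂ y‖ ≤ L * ‖x₁ - x₂‖)
    (hfxLy : ∀ (x : H₁) (y₁ y₂ : H₂), ‖gradx f x y₁ - gradx f x y₂‖ ≤ L * ‖y₁ - y₂‖)
    (hfyLx : ∀ (y : H₂) (x₁ x₂ : H₁), ‖grady f x₁ y - grady f x₂ y‖ ≤ L * ‖x₁ - x₂‖)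
    (hfyLy : ∀ (x : H₁) (y₁ y₂ : H₂), ‖grady f x y₁ - grady f x y₂‖ ≤ L * ‖y₁ - y₂‖)
    -- `∇ₓ g` and `∇_y g` are `L`-Lipschitz in each variable
    (hgxLx : ∀ (y : H₂) (x₁ x₂ : H₁), ‖gradx g x₁ y - gradx g x₂ y‖ ≤ L * ‖x₁ - x₂‖)
    (hgxLy : ∀ (x : H₁) (y₁ y₂ : H₂), ‖gradx g x y₁ - gradx g x y₂‖ ≤ L * ‖y₁ - y₂‖)
    (hgyLx : ∀ (y : H₂) (x₁ x₂ : H₁), ‖grady g x₁ y - grady g x₂ y‖ ≤ L * ‖x₁ - x₂‖)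
    (hgyLy : ∀ (x : H₁) (y₁ y₂ : H₂), ‖grady g x y₁ - grady g x y₂‖ ≤ L * ‖y₁ - y₂‖)
    -- `∇²_{yy} g` and `∇²_{xy} g` are `ρ`-Lipschitz in operator norm in each variable
    (hyyLx : ∀ (y : H₂) (x₁ x₂ : H₁), ‖hessyy g x₁ y - hessyy g x₂ y‖ ≤ ρ * ‖x₁ - x₂‖)
    (hyyLy : ∀ (x : H₁) (y₁ y₂ : H₂), ‖hessyy g x y₁ - hessyy g x y₂‖ ≤ ρ * ‖y₁ - y₂‖)
    (hxyLx : ∀ (y : H₂) (x₁ x₂ : H₁), ‖hessxy g x₁ y - hessxy g x₂ y‖ ≤ ρ * ‖x₁ - x₂‖)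
    (hxyLy : ∀ (x : H₁) (y₁ y₂ : H₂), ‖hessxy g x y₁ - hessxy g x y₂‖ ≤ ρ * ‖y₁ - y₂‖)
    -- `∇²_{yy} g(x,y) ⪰ μ · id` for all `(x,y)`
    (hpos : ∀ (x : H₁) (y v : H₂), μ * ‖v‖ ^ 2 ≤ ⟪hessyy g x y v, v⟫)
    -- `y*(x)` is the (unique) minimizer of `g(x, ·)`, characterized by `∇_y g(x, y*(x)) = 0`
    (ystar : H₁ → H₂)
    (hmin : ∀ (x : H₁) (z : H₂), g x (ystar x) ≤ g x z)
    (hstat : ∀ x : H₁, grady g x (ystar x) = 0)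
    -- `Hinv x y` is the inverse of `∇²_{yy} g(x,y)`
    (Hinv : H₁ → H₂ → H₂ →L[ℝ] H₂)
    (hHinv1 : ∀ (x : H₁) (y : H₂),
      (Hinv x y).comp (hessyy g x y) = ContinuousLinearMap.id ℝ H₂)
    (hHinv2 : ∀ (x : H₁) (y : H₂),
      (hessyy g x y).comp (Hinv x y) = ContinuousLinearMap.id ℝ H₂)
    -- the approximate hypergradient map `Ḡ`
    (Gbar : H₁ → H₂ → H₁)
    (hGbar : ∀ (x : H₁) (y : H₂),
      Gbar x y = gradx f x y - hessxy g x y (Hinv x y (grady f x y))) :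
    (∀ (x : H₁) (y₁ y₂ : H₂),
      ‖Gbar x y₁ - Gbar x y₂‖ ≤
        (L + ρ * M / μ + L ^ 2 / μ + L * M * ρ / μ ^ 2) * ‖y₁ - y₂‖) ∧
      ∀ (x : H₁) (yhat : H₂),
        ‖Gbar x yhat - Gbar x (ystar x)‖ ≤
          (L + ρ / μ * M + L / μ * L + L / μ * (ρ / μ) * M) * ‖yhat - ystar x‖ := by

  -- `‖hessxy g x y‖ ≤ L`
  have hA : ∀ (x : H₁) (y : H₂), ‖hessxy g x y‖ ≤ L := by
    intro x y
    have hlip : LipschitzWith ⟨L, hL⟩ (fun x' => grady g x' y) := by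
      refine LipschitzWith.of_dist_le_mul fun a b => ?_
      rw [dist_eq_norm, dist_eq_norm]; exact hgyLx y a b
    have h1 : ‖hessyx g x y‖ ≤ L := by
      exact norm_fderiv_le_of_lipschitz ℝ hlip (x₀ := x)
    calc ‖hessxy g x y‖ = ‖hessyx g x y‖ := by
          rw [hessxy]; exact ContinuousLinearMap.adjoint.norm_map _
      _ ≤ L := h1
  -- `‖Hinv x y w‖ ≤ ‖w‖ / μ`
  have hB : ∀ (x : H₁) (y : H₂) (w : H₂), ‖Hinv x y w‖ ≤ (1 / μ) * ‖w‖ := by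
    intro x y w
    set v := Hinv x y w with hv
    have hHv : hessyy g x y v = w := by
      have := congrArg (fun T : H₂ →L[ℝ] H₂ => T w) (hHinv2 x y)
      simpa using this
    have h1 : μ * ‖v‖ ^ 2 ≤ ‖w‖ * ‖v‖ := by
      calc μ * ‖v‖ ^ 2 ≤ ⟪hessyy g x y v, v⟫ := hpos x y v
        _ = ⟪w, v⟫ := by rw [hHv]
        _ ≤ ‖w‖ * ‖v‖ := real_inner_le_norm w v
    rcases eq_or_lt_of_le (norm_nonneg v) with h0 | h0
    · rw [← h0]; positivity
    · have h2 : ‖v‖ * μ ≤ ‖w‖ := by nlinarith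
      calc ‖v‖ = (1 / μ) * (‖v‖ * μ) := by field_simp
        _ ≤ (1 / μ) * ‖w‖ := by gcongr
  have hBop : ∀ (x : H₁) (y : H₂), ‖Hinv x y‖ ≤ 1 / μ := by
    intro x y
    exact ContinuousLinearMap.opNorm_le_bound _ (by positivity) (fun w => hB x y w)
  -- Hinv difference bound
  have hBdiff : ∀ (x : H₁) (y₁ y₂ : H₂),
      ‖Hinv x y₁ - Hinv x y₂‖ ≤ ρ / μ ^ 2 * ‖y₁ - y₂‖ := by
    intro x y₁ y₂
    have key : Hinv x y₁ - Hinv x y₂ =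
        ((Hinv x y₁).comp (hessyy g x y₂ - hessyy g x y₁)).comp (Hinv x y₂) := by
      have e1 : (Hinv x y₁).comp ((hessyy g x y₂).comp (Hinv x y₂)) = Hinv x y₁ := by
        rw [hHinv2 x y₂, ContinuousLinearMap.comp_id]
      have e2 : (Hinv x y₁).comp ((hessyy g x y₁).comp (Hinv x y₂)) = Hinv x y₂ := by
        rw [← ContinuousLinearMap.comp_assoc, hHinv1 x y₁, ContinuousLinearMap.id_comp]
      rw [ContinuousLinearMap.comp_sub, ContinuousLinearMap.sub_comp,
        ContinuousLinearMap.comp_assoc, ContinuousLinearMap.comp_assoc, e1, e2]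
    rw [key]
    calc ‖((Hinv x y₁).comp (hessyy g x y₂ - hessyy g x y₁)).comp (Hinv x y₂)‖
        ≤ ‖(Hinv x y₁).comp (hessyy g x y₂ - hessyy g x y₁)‖ * ‖Hinv x y₂‖ :=
          ContinuousLinearMap.opNorm_comp_le _ _
      _ ≤ (‖Hinv x y₁‖ * ‖hessyy g x y₂ - hessyy g x y₁‖) * ‖Hinv x y₂‖ := by
          gcongr; exact ContinuousLinearMap.opNorm_comp_le _ _
      _ ≤ ((1 / μ) * (ρ * ‖y₂ - y₁‖)) * (1 / μ) := by
          have h1 := hBop x y₁; have h2 := hBop x y₂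
          have h3 := hyyLy x y₂ y₁
          gcongr <;> first | exact h1 | exact h3 | exact h2 | positivity | exact Or.inl trivial
      _ = ρ / μ ^ 2 * ‖y₁ - y₂‖ := by rw [norm_sub_rev y₂ y₁]; ring
  -- main Lipschitz bound
  have main : ∀ (x : H₁) (y₁ y₂ : H₂),
      ‖Gbar x y₁ - Gbar x y₂‖ ≤
        (L + ρ * M / μ + L ^ 2 / μ + L * M * ρ / μ ^ 2) * ‖y₁ - y₂‖ := by
    intro x y₁ y₂
    set A₁ := hessxy g x y₁; set A₂ := hessxy g x y₂
    set B₁ := Hinv x y₁; set B₂ := Hinv x y₂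
    set v₁ := grady f x y₁; set v₂ := grady f x y₂
    have decomp : Gbar x y₁ - Gbar x y₂ =
        (gradx f x y₁ - gradx f x y₂)
          - ((A₁ - A₂) (B₁ v₁) + A₂ ((B₁ - B₂) v₁) + A₂ (B₂ (v₁ - v₂))) := by
      rw [hGbar, hGbar]
      simp only [ContinuousLinearMap.sub_apply, map_sub]
      abel
    have t0 : ‖gradx f x y₁ - gradx f x y₂‖ ≤ L * ‖y₁ - y₂‖ := hfxLy x y₁ y₂
    have t1 : ‖(A₁ - A₂) (B₁ v₁)‖ ≤ ρ * M / μ * ‖y₁ - y₂‖ := by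
      calc ‖(A₁ - A₂) (B₁ v₁)‖ ≤ ‖A₁ - A₂‖ * ‖B₁ v₁‖ :=
            ContinuousLinearMap.le_opNorm _ _
        _ ≤ (ρ * ‖y₁ - y₂‖) * ((1 / μ) * M) := by
            have h1 := hxyLy x y₁ y₂
            have h2 : ‖B₁ v₁‖ ≤ (1 / μ) * M := by
              calc ‖B₁ v₁‖ ≤ (1 / μ) * ‖v₁‖ := hB x y₁ v₁
                _ ≤ (1 / μ) * M := by gcongr; exact hfybd x y₁
            gcongr <;> first | exact h1 | exact h2 | positivity | exact Or.inl trivial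
        _ = ρ * M / μ * ‖y₁ - y₂‖ := by field_simp
    have t2 : ‖A₂ ((B₁ - B₂) v₁)‖ ≤ L * M * ρ / μ ^ 2 * ‖y₁ - y₂‖ := by
      calc ‖A₂ ((B₁ - B₂) v₁)‖ ≤ ‖A₂‖ * ‖(B₁ - B₂) v₁‖ :=
            ContinuousLinearMap.le_opNorm _ _
        _ ≤ L * ((ρ / μ ^ 2 * ‖y₁ - y₂‖) * M) := by
            have h2 : ‖(B₁ - B₂) v₁‖ ≤ (ρ / μ ^ 2 * ‖y₁ - y₂‖) * M := by
              calc ‖(B₁ - B₂) v₁‖ ≤ ‖B₁ - B₂‖ * ‖v₁‖ :=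
                    ContinuousLinearMap.le_opNorm _ _
                _ ≤ (ρ / μ ^ 2 * ‖y₁ - y₂‖) * M := by
                    have := hBdiff x y₁ y₂
                    gcongr <;> first | exact this | exact hfybd x y₁ | positivity | exact Or.inl trivial
            gcongr <;> first | exact hA x y₂ | exact h2 | positivity | exact Or.inl trivial
        _ = L * M * ρ / μ ^ 2 * ‖y₁ - y₂‖ := by ring
    have t3 : ‖A₂ (B₂ (v₁ - v₂))‖ ≤ L ^ 2 / μ * ‖y₁ - y₂‖ := by
      calc ‖A₂ (B₂ (v₁ - v₂))‖ ≤ ‖A₂‖ * ‖B₂ (v₁ - v₂)‖ :=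
            ContinuousLinearMap.le_opNorm _ _
        _ ≤ L * ((1 / μ) * (L * ‖y₁ - y₂‖)) := by
            have h2 : ‖B₂ (v₁ - v₂)‖ ≤ (1 / μ) * (L * ‖y₁ - y₂‖) := by
              calc ‖B₂ (v₁ - v₂)‖ ≤ (1 / μ) * ‖v₁ - v₂‖ := hB x y₂ _
                _ ≤ (1 / μ) * (L * ‖y₁ - y₂‖) := by gcongr; exact hfyLy x y₁ y₂
            gcongr <;> first | exact hA x y₂ | exact h2 | positivity | exact Or.inl trivial
        _ = L ^ 2 / μ * ‖y₁ - y₂‖ := by field_simp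
    calc ‖Gbar x y₁ - Gbar x y₂‖
        ≤ ‖gradx f x y₁ - gradx f x y₂‖
            + (‖(A₁ - A₂) (B₁ v₁)‖ + ‖A₂ ((B₁ - B₂) v₁)‖ + ‖A₂ (B₂ (v₁ - v₂))‖) := by
          rw [decomp]
          refine (norm_sub_le _ _).trans ?_
          gcongr
          exact (norm_add_le _ _).trans (by gcongr; exact norm_add_le _ _)
      _ ≤ L * ‖y₁ - y₂‖ + (ρ * M / μ * ‖y₁ - y₂‖ + L * M * ρ / μ ^ 2 * ‖y₁ - y₂‖
            + L ^ 2 / μ * ‖y₁ - y₂‖) := by gcongr <;> first | exact t0 | exact t1 | exact t2 | exact t3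
      _ = (L + ρ * M / μ + L ^ 2 / μ + L * M * ρ / μ ^ 2) * ‖y₁ - y₂‖ := by ring
  refine ⟨main, fun x yhat => ?_⟩
  have hconst : (L + ρ / μ * M + L / μ * L + L / μ * (ρ / μ) * M)
      = (L + ρ * M / μ + L ^ 2 / μ + L * M * ρ / μ ^ 2) := by
    field_simp
  rw [hconst]
  exact main x yhat (ystar x)
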